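/- A ring R is called left s-unital if r ∈ Rr for every r ∈ R. If R is left s-unital and D ⊆ R is n-thick (i.e., D is symmetric and for any elements g_0,...,g_{n-1} of (R,+) there exist i < j < n with g_j − g_i ∈ D), then n!·R ⊆ R·D, i.e., for every r ∈ R there exist s ∈ R and d ∈ D with n!·r = s·d. -/
import Mathlib


/-- If R is left s-unital (∀ r, r ∈ Rr) and D ⊆ R is symmetric and n-thick with
respect to (R,+), then n!·R ⊆ R·D. -/
theorem stmt_6 {R : Type*} [NonUnitalRing R] (n : ℕ) (D : Set R)
    (hsymm : -D = D)
    (hthick : ∀ g : Fin n → R, ∃ i j : Fin n, i < j ∧ g j - g i ∈ D)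
    (hsu : ∀ r : R, ∃ s : R, r = s * r) :
    ∀ r : R, ∃ s : R, ∃ d ∈ D, n.factorial • r = s * d := by
  intro r
  obtain ⟨i, j, hij, hd⟩ := hthick (fun i => (i : ℕ) • r)
  set k : ℕ := (j : ℕ) - (i : ℕ) with hk
  have hij' : (i : ℕ) ≤ (j : ℕ) := le_of_lt hij
  have hgd : k • r ∈ D := by
    have h2 : (j : ℕ) • r - (i : ℕ) • r = k • r := by
      rw [sub_eq_add_neg, sub_nsmul r hij']
    simpa [h2] using hd
  have hkpos : 0 < k := by omega
  have hkn : k ≤ n := by omega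
  obtain ⟨m, hm⟩ := Nat.dvd_factorial hkpos hkn
  obtain ⟨s, hs⟩ := hsu (k • r)
  refine ⟨m • s, k • r, hgd, ?_⟩
  calc n.factorial • r = (k * m) • r := by rw [← hm]
    _ = m • (k • r) := by rw [mul_comm, mul_smul]
    _ = m • (s * (k • r)) := by rw [← hs]
    _ = (m • s) * (k • r) := by rw [smul_mul_assoc]
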